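/- Assume μ is Ahlfors d_H-regular and the heat kernel satisfies the two-sided non-local estimates. Let p ∈ [1,∞) and α ∈ [0, 1/p). Then there exist constants c, C > 0, depending only on p, α and the structural constants, such that every f ∈ L^p(X,μ) satisfies c · sup_{r>0} N_p^{α d_W}(f,r) ≤ ‖f‖_{p,α} ≤ C · sup_{r>0} N_p^{α d_W}(f,r); in particular B^{p,α}(X) = { f ∈ L^p(X,μ) : sup_{r>0} N_p^{α d_W}(f,r) < ∞ }. -/

import Mathlib

open MeasureTheory ENNReal Metric Filter

noncomputable section

namespace BesovDirichlet

variable {X : Type*} [MeasurableSpace X]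

/-- A heat kernel on a measure space: jointly measurable, nonnegative, symmetric,
satisfying the semigroup property and conservative. -/
structure IsHeatKernel (μ : Measure X) (K : ℝ → X → X → ℝ) : Prop where
  measurable : ∀ t : ℝ, Measurable fun xy : X × X => K t xy.1 xy.2
  nonneg : ∀ (t : ℝ) (x y : X), 0 ≤ K t x y
  symm : ∀ (t : ℝ) (x y : X), K t x y = K t y x
  semigroup : ∀ s t : ℝ, 0 < s → 0 < t →
    ∀ᵐ xy ∂(μ.prod μ), (∫ z, K t xy.1 z * K s z xy.2 ∂μ) = K (t + s) xy.1 xy.2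
  conservative : ∀ t : ℝ, 0 < t → ∀ᵐ x ∂μ, (∫ y, K t x y ∂μ) = 1

/-- The heat semigroup `P_t f (x) = ∫ p_t(x,y) f(y) dμ(y)`. -/
def heatOp (μ : Measure X) (K : ℝ → X → X → ℝ) (t : ℝ) (f : X → ℝ) (x : X) : ℝ :=
  ∫ y, K t x y * f y ∂μ

/-- The double integral `∫∫ |f(x) − f(y)|^p p_t(x,y) dμ(x) dμ(y)` as an extended real. -/
def besovEnergy (μ : Measure X) (K : ℝ → X → X → ℝ) (p t : ℝ) (f : X → ℝ) : ℝ≥0∞ :=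
  ∫⁻ x, (∫⁻ y, ENNReal.ofReal (|f x - f y| ^ p) * ENNReal.ofReal (K t x y) ∂μ) ∂μ

/-- The heat-semigroup Besov seminorm `‖f‖_{p,α}`. -/
def besovSeminorm (μ : Measure X) (K : ℝ → X → X → ℝ) (p α : ℝ) (f : X → ℝ) : ℝ≥0∞ :=
  ⨆ (t : ℝ) (_ : 0 < t), ENNReal.ofReal (t ^ (-α)) * besovEnergy μ K p t f ^ (1 / p)

/-- Membership in the Besov space `B^{p,α}(X)`. -/
def MemBesov (μ : Measure X) (K : ℝ → X → X → ℝ) (p α : ℝ) (f : X → ℝ) : Prop :=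
  MemLp f (ENNReal.ofReal p) μ ∧ besovSeminorm μ K p α f ≠ ∞

/-- Ahlfors `d_H`-regularity of the measure `μ`. -/
def AhlforsRegular [PseudoMetricSpace X] (μ : Measure X) (c₁ c₂ dH : ℝ) : Prop :=
  ∀ (x : X) (r : ℝ), 0 < r →
    ENNReal.ofReal (c₁ * r ^ dH) ≤ μ (Metric.ball x r) ∧
      μ (Metric.ball x r) ≤ ENNReal.ofReal (c₂ * r ^ dH)

/-- Upper sub-Gaussian heat kernel estimate with parameters `d_H, d_W` and constants `c₃, c₄`. -/
def SubGaussianUpperBound [PseudoMetricSpace X] (μ : Measure X) (K : ℝ → X → X → ℝ)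
    (c₃ c₄ dH dW : ℝ) : Prop :=
  ∀ t : ℝ, 0 < t → ∀ᵐ xy ∂(μ.prod μ),
    K t xy.1 xy.2 ≤ c₃ * t ^ (-(dH / dW)) *
      Real.exp (-c₄ * (dist xy.1 xy.2 ^ dW / t) ^ (1 / (dW - 1)))

/-- Lower sub-Gaussian heat kernel estimate with parameters `d_H, d_W` and constants `c₅, c₆`. -/
def SubGaussianLowerBound [PseudoMetricSpace X] (μ : Measure X) (K : ℝ → X → X → ℝ)
    (c₅ c₆ dH dW : ℝ) : Prop :=
  ∀ t : ℝ, 0 < t → ∀ᵐ xy ∂(μ.prod μ),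
    c₅ * t ^ (-(dH / dW)) *
        Real.exp (-c₆ * (dist xy.1 xy.2 ^ dW / t) ^ (1 / (dW - 1))) ≤ K t xy.1 xy.2

/-- The metric Besov quantity `N_p^β(f,r) = r^{−(β+d_H/p)} (∬_{d(x,y)<r} |f(x)−f(y)|^p)^{1/p}`. -/
def metricBesovN [PseudoMetricSpace X] (μ : Measure X) (dH p β : ℝ) (f : X → ℝ) (r : ℝ) :
    ℝ≥0∞ :=
  ENNReal.ofReal (r ^ (-(β + dH / p))) *
    (∫⁻ x, (∫⁻ y in Metric.ball x r, ENNReal.ofReal (|f x - f y| ^ p) ∂μ) ∂μ) ^ (1 / p)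

/-- Upper non-local heat kernel estimate. -/
def NonLocalUpperBound [PseudoMetricSpace X] (μ : Measure X) (K : ℝ → X → X → ℝ)
    (c₃ c₄ dH dW : ℝ) : Prop :=
  ∀ t : ℝ, 0 < t → ∀ᵐ xy ∂(μ.prod μ),
    K t xy.1 xy.2 ≤ c₃ * t ^ (-(dH / dW)) *
      (1 + c₄ * dist xy.1 xy.2 / t ^ (1 / dW)) ^ (-(dH + dW))

/-- Lower non-local heat kernel estimate. -/
def NonLocalLowerBound [PseudoMetricSpace X] (μ : Measure X) (K : ℝ → X → X → ℝ)
    (c₅ c₆ dH dW : ℝ) : Prop :=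
  ∀ t : ℝ, 0 < t → ∀ᵐ xy ∂(μ.prod μ),
    c₅ * t ^ (-(dH / dW)) *
        (1 + c₆ * dist xy.1 xy.2 / t ^ (1 / dW)) ^ (-(dH + dW)) ≤ K t xy.1 xy.2


section Aux

variable [PseudoMetricSpace X]

lemma rpow_neg_anti {a b e : ℝ} (ha : 0 < a) (hab : a ≤ b) (he : 0 ≤ e) :
    b ^ (-e) ≤ a ^ (-e) := by
  rw [Real.rpow_neg (ha.trans_le hab).le, Real.rpow_neg ha.le]
  exact inv_anti₀ (Real.rpow_pos_of_pos ha e) (Real.rpow_le_rpow ha.le hab he)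

/-- The metric double integral over `d(x,y) < ρ`. -/
def Dint (μ : Measure X) (p : ℝ) (f : X → ℝ) (ρ : ℝ) : ℝ≥0∞ :=
  ∫⁻ x, (∫⁻ y in Metric.ball x ρ, ENNReal.ofReal (|f x - f y| ^ p) ∂μ) ∂μ

lemma metricBesovN_eq (μ : Measure X) (dH p β : ℝ) (f : X → ℝ) (r : ℝ) :
    metricBesovN μ dH p β f r
      = ENNReal.ofReal (r ^ (-(β + dH / p))) * (Dint μ p f r) ^ (1 / p) := rfl

lemma Dint_congr {μ : Measure X} {f g : X → ℝ} (hfg : f =ᵐ[μ] g) (p ρ : ℝ) :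
    Dint μ p f ρ = Dint μ p g ρ := by
  refine lintegral_congr_ae ?_
  filter_upwards [hfg] with x hx
  refine lintegral_congr_ae ?_
  filter_upwards [ae_restrict_of_ae hfg] with y hy
  rw [hx, hy]

lemma metricBesovN_congr {μ : Measure X} {f g : X → ℝ} (hfg : f =ᵐ[μ] g)
    (dH p β r : ℝ) : metricBesovN μ dH p β f r = metricBesovN μ dH p β g r := by
  rw [metricBesovN_eq, metricBesovN_eq, Dint_congr hfg]

end Aux

lemma besovEnergy_congr {μ : Measure X} {K : ℝ → X → X → ℝ} {f g : X → ℝ}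
    (hfg : f =ᵐ[μ] g) (p t : ℝ) : besovEnergy μ K p t f = besovEnergy μ K p t g := by
  refine lintegral_congr_ae ?_
  filter_upwards [hfg] with x hx
  refine lintegral_congr_ae ?_
  filter_upwards [hfg] with y hy
  rw [hx, hy]

lemma besovSeminorm_congr {μ : Measure X} {K : ℝ → X → X → ℝ} {f g : X → ℝ}
    (hfg : f =ᵐ[μ] g) (p α : ℝ) : besovSeminorm μ K p α f = besovSeminorm μ K p α g := by
  unfold besovSeminorm
  exact iSup_congr fun t => iSup_congr fun _ => by rw [besovEnergy_congr hfg]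

section Core

variable {Y : Type} [MetricSpace Y] [MeasurableSpace Y] [BorelSpace Y]

lemma secondCountable_of_ahlfors {μ : Measure Y} {c₁ c₂ dH : ℝ} (hc₁ : 0 < c₁)
    (hAR : AhlforsRegular μ c₁ c₂ dH) : SecondCountableTopology Y := by
  rcases isEmpty_or_nonempty Y with hY | hY
  · exact Metric.secondCountable_of_almost_dense_set fun ε hε =>
      ⟨∅, Set.countable_empty, fun x => (IsEmpty.false x).elim⟩
  obtain ⟨x₀⟩ := hY
  apply Metric.secondCountable_of_almost_dense_set
  intro ε hε
  have hnet : ∀ n : ℕ, ∃ s : Set Y, s.Countable ∧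
      ∀ x ∈ Metric.ball x₀ (n : ℝ), ∃ y ∈ s, dist x y ≤ ε := by
    intro n
    by_contra hcon
    push_neg at hcon
    have h : ∀ s : Finset Y, (∀ x ∈ s, x ∈ Metric.ball x₀ (n : ℝ)) →
        ∃ y, y ∈ Metric.ball x₀ (n : ℝ) ∧ ∀ x ∈ s, ε < dist x y := by
      intro s _
      obtain ⟨x, hx, hxs⟩ := hcon ↑s s.countable_toSet
      exact ⟨x, hx, fun z hz => by rw [dist_comm]; exact hxs z hz⟩
    letI : Std.Symm fun x y : Y => ε < dist x y :=
      ⟨fun a b hab => by rwa [dist_comm]⟩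
    obtain ⟨f, hfball, hfsep⟩ := exists_seq_of_forall_finset_exists'
      (fun x => x ∈ Metric.ball x₀ (n : ℝ)) (fun x y => ε < dist x y) h
    have hdisj : Pairwise (Function.onFun Disjoint fun k => Metric.ball (f k) (ε / 2)) := by
      intro a b hab
      refine Set.disjoint_left.2 fun z hza hzb => ?_
      have := hfsep hab
      have h1 : dist (f a) (f b) ≤ dist z (f a) + dist z (f b) := dist_triangle_left _ _ _
      rw [Metric.mem_ball] at hza hzb
      simp only [Function.onFun] at this
      linarith
    have hsub : (⋃ k, Metric.ball (f k) (ε / 2)) ⊆ Metric.ball x₀ ((n : ℝ) + ε) := by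
      refine Set.iUnion_subset fun k z hz => ?_
      rw [Metric.mem_ball] at hz ⊢
      have h1 : dist z x₀ ≤ dist z (f k) + dist (f k) x₀ := dist_triangle _ _ _
      have h2 : dist (f k) x₀ < n := Metric.mem_ball.1 (hfball k)
      linarith
    have htop : μ (⋃ k, Metric.ball (f k) (ε / 2)) = ∞ := by
      rw [measure_iUnion hdisj fun k => measurableSet_ball]
      have hlb : ∀ k : ℕ, ENNReal.ofReal (c₁ * (ε / 2) ^ dH) ≤ μ (Metric.ball (f k) (ε / 2)) :=
        fun k => (hAR (f k) (ε / 2) (by linarith)).1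
      refine top_le_iff.1 (le_trans ?_ (ENNReal.tsum_le_tsum hlb))
      rw [ENNReal.tsum_const_eq_top_of_ne_zero]
      simp only [ne_eq, ENNReal.ofReal_eq_zero, not_le]
      positivity
    have hfin : μ (Metric.ball x₀ ((n : ℝ) + ε)) < ∞ :=
      lt_of_le_of_lt (hAR x₀ _ (by positivity)).2 ENNReal.ofReal_lt_top
    exact absurd ((measure_mono hsub).trans_lt hfin) (by rw [htop]; simp)
  choose s hsc hsnet using hnet
  refine ⟨⋃ n, s n, Set.countable_iUnion hsc, fun x => ?_⟩
  obtain ⟨n, hn⟩ := exists_nat_gt (dist x x₀)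
  obtain ⟨y, hy, hxy⟩ := hsnet n x (Metric.mem_ball.2 hn)
  exact ⟨y, Set.mem_iUnion.2 ⟨n, hy⟩, hxy⟩

lemma measurable_ballInt [SecondCountableTopology Y] (μ : Measure Y) [SigmaFinite μ] {f : Y → ℝ} (hf : Measurable f)
    (p ρ : ℝ) (hp : 0 ≤ p) :
    Measurable fun x => ∫⁻ y in Metric.ball x ρ, ENNReal.ofReal (|f x - f y| ^ p) ∂μ := by
  have hmeas : Measurable fun z : Y × Y =>
      Set.indicator {z : Y × Y | dist z.1 z.2 < ρ}
        (fun z => ENNReal.ofReal (|f z.1 - f z.2| ^ p)) z := by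
    refine Measurable.indicator ?_ ?_
    · exact ENNReal.measurable_ofReal.comp
        (((Real.continuous_rpow_const hp).comp continuous_abs).measurable.comp
          ((hf.comp measurable_fst).sub (hf.comp measurable_snd)))
    · exact measurableSet_lt measurable_dist measurable_const
  have heq : ∀ x, (∫⁻ y in Metric.ball x ρ, ENNReal.ofReal (|f x - f y| ^ p) ∂μ)
      = ∫⁻ y, Set.indicator {z : Y × Y | dist z.1 z.2 < ρ}
          (fun z => ENNReal.ofReal (|f z.1 - f z.2| ^ p)) (x, y) ∂μ := by
    intro x
    rw [← lintegral_indicator measurableSet_ball]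
    refine lintegral_congr fun y => ?_
    by_cases h : dist x y < ρ
    · rw [Set.indicator_of_mem (Metric.mem_ball'.2 h),
        Set.indicator_of_mem (by exact h : (x, y) ∈ {z : Y × Y | dist z.1 z.2 < ρ})]
    · rw [Set.indicator_of_notMem fun hc => h (Metric.mem_ball'.1 hc),
        Set.indicator_of_notMem (by exact h : (x, y) ∉ {z : Y × Y | dist z.1 z.2 < ρ})]
  simp_rw [heq]
  exact hmeas.lintegral_prod_right'

lemma Dint_le_sup (μ : Measure Y) {dH p : ℝ} (β : ℝ) (hp0 : 0 < p)
    (f : Y → ℝ) {ρ : ℝ} (hρ : 0 < ρ) :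
    Dint μ p f ρ ≤ ENNReal.ofReal (ρ ^ ((β + dH / p) * p)) *
      (⨆ (r : ℝ) (_ : 0 < r), metricBesovN μ dH p β f r) ^ p := by
  set S := ⨆ (r : ℝ) (_ : 0 < r), metricBesovN μ dH p β f r with hS
  have hN : metricBesovN μ dH p β f ρ ≤ S := le_iSup₂ (f := fun r (_ : 0 < r) => metricBesovN μ dH p β f r) ρ hρ
  have hroot : (Dint μ p f ρ) ^ (1 / p)
      = ENNReal.ofReal (ρ ^ (β + dH / p)) * metricBesovN μ dH p β f ρ := by
    rw [metricBesovN_eq, ← mul_assoc, ← ENNReal.ofReal_mul (by positivity),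
      ← Real.rpow_add hρ, add_neg_cancel, Real.rpow_zero, ENNReal.ofReal_one, one_mul]
  calc Dint μ p f ρ = ((Dint μ p f ρ) ^ (1 / p)) ^ p := by
        rw [← ENNReal.rpow_mul, one_div_mul_cancel hp0.ne', ENNReal.rpow_one]
    _ = (ENNReal.ofReal (ρ ^ (β + dH / p)) * metricBesovN μ dH p β f ρ) ^ p := by rw [hroot]
    _ ≤ (ENNReal.ofReal (ρ ^ (β + dH / p)) * S) ^ p :=
        ENNReal.rpow_le_rpow (mul_le_mul_right hN _) hp0.le
    _ = ENNReal.ofReal (ρ ^ ((β + dH / p) * p)) * S ^ p := by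
        rw [ENNReal.mul_rpow_of_nonneg _ _ hp0.le,
          ENNReal.ofReal_rpow_of_pos (Real.rpow_pos_of_pos hρ _), ← Real.rpow_mul hρ.le]

lemma lower_per_r (μ : Measure Y) [SigmaFinite μ] (K : ℝ → Y → Y → ℝ)
    {dH dW c₅ c₆ p α : ℝ} (hdH : 0 < dH) (hdW0 : 0 < dW) (hc₅ : 0 < c₅) (hc₆ : 0 < c₆)
    (hp : 1 ≤ p) (hLB : NonLocalLowerBound μ K c₅ c₆ dH dW)
    (f : Y → ℝ) (r : ℝ) (hr : 0 < r) :
    ENNReal.ofReal (c₅ ^ (1 / p) * (1 + c₆) ^ (-((dH + dW) / p))) *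
        metricBesovN μ dH p (α * dW) f r
      ≤ ENNReal.ofReal ((r ^ dW) ^ (-α)) * besovEnergy μ K p (r ^ dW) f ^ (1 / p) := by
  have hp0 : (0 : ℝ) < p := lt_of_lt_of_le one_pos hp
  have ht : 0 < r ^ dW := Real.rpow_pos_of_pos hr dW
  have h16 : (0 : ℝ) < 1 + c₆ := by linarith
  have hrt : (r ^ dW) ^ (1 / dW) = r := by
    rw [← Real.rpow_mul hr.le, mul_one_div, div_self hdW0.ne', Real.rpow_one]
  set t := r ^ dW with htdef
  set κ := c₅ * t ^ (-(dH / dW)) * (1 + c₆) ^ (-(dH + dW)) with hκdef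
  have hκpos : 0 < κ := by positivity
  have hae : ∀ᵐ x ∂μ, ∀ᵐ y ∂μ,
      c₅ * t ^ (-(dH / dW)) * (1 + c₆ * dist x y / t ^ (1 / dW)) ^ (-(dH + dW)) ≤ K t x y :=
    Measure.ae_ae_of_ae_prod (hLB t ht)
  have key : ENNReal.ofReal κ * Dint μ p f r ≤ besovEnergy μ K p t f := by
    rw [Dint, besovEnergy, ← lintegral_const_mul' _ _ ENNReal.ofReal_ne_top]
    refine lintegral_mono_ae ?_
    filter_upwards [hae] with x hx
    calc ENNReal.ofReal κ * ∫⁻ y in Metric.ball x r, ENNReal.ofReal (|f x - f y| ^ p) ∂μ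
        = ∫⁻ y in Metric.ball x r,
            ENNReal.ofReal (|f x - f y| ^ p) * ENNReal.ofReal κ ∂μ := by
          rw [← lintegral_const_mul' _ _ ENNReal.ofReal_ne_top]
          exact lintegral_congr fun y => mul_comm _ _
      _ ≤ ∫⁻ y in Metric.ball x r,
            ENNReal.ofReal (|f x - f y| ^ p) * ENNReal.ofReal (K t x y) ∂μ := by
          refine lintegral_mono_ae ?_
          filter_upwards [ae_restrict_of_ae hx, ae_restrict_mem measurableSet_ball]
            with y hy hyball
          rw [hrt] at hy
          refine mul_le_mul_right (ENNReal.ofReal_le_ofReal (le_trans ?_ hy)) _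
          rw [hκdef]
          refine mul_le_mul_of_nonneg_left ?_ (by positivity)
          refine rpow_neg_anti (by positivity) ?_ (by positivity)
          have hd : dist x y / r ≤ 1 := by
            rw [div_le_one hr]
            rw [Metric.mem_ball] at hyball
            rw [dist_comm]
            exact hyball.le
          have : c₆ * dist x y / r ≤ c₆ := by
            rw [mul_div_assoc]
            calc c₆ * (dist x y / r) ≤ c₆ * 1 :=
              mul_le_mul_of_nonneg_left hd hc₆.le
            _ = c₆ := mul_one c₆
          linarith
      _ ≤ ∫⁻ y, ENNReal.ofReal (|f x - f y| ^ p) * ENNReal.ofReal (K t x y) ∂μ :=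
          setLIntegral_le_lintegral _ _
  have h2 : ENNReal.ofReal (t ^ (-α)) * (ENNReal.ofReal κ * Dint μ p f r) ^ (1 / p)
      ≤ ENNReal.ofReal (t ^ (-α)) * besovEnergy μ K p t f ^ (1 / p) :=
    mul_le_mul_right (ENNReal.rpow_le_rpow key (by positivity)) _
  refine le_trans (le_of_eq ?_) h2
  rw [metricBesovN_eq, ENNReal.mul_rpow_of_nonneg _ _ (by positivity : (0:ℝ) ≤ 1 / p),
    ENNReal.ofReal_rpow_of_pos hκpos, ← mul_assoc, ← mul_assoc,
    ← ENNReal.ofReal_mul (by positivity), ← ENNReal.ofReal_mul (by positivity)]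
  congr 2
  have e1 : t ^ (-α) = r ^ (dW * -α) := by rw [Real.rpow_mul hr.le]
  have e2 : t ^ (-(dH / dW)) = r ^ (dW * -(dH / dW)) := by rw [Real.rpow_mul hr.le]
  have edW : dW * -(dH / dW) * (1 / p) = -(dH / p) := by field_simp
  have eB : -(dH + dW) * (1 / p) = -((dH + dW) / p) := by ring
  have er : dW * -α + -(dH / p) = -(α * dW + dH / p) := by ring
  calc c₅ ^ (1 / p) * (1 + c₆) ^ (-((dH + dW) / p)) * r ^ (-(α * dW + dH / p))
      = c₅ ^ (1 / p) * (1 + c₆) ^ (-((dH + dW) / p)) * (r ^ (dW * -α) * r ^ (-(dH / p))) := by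
        rw [← Real.rpow_add hr, er]
    _ = r ^ (dW * -α) *
        (c₅ ^ (1 / p) * r ^ (dW * -(dH / dW) * (1 / p)) * (1 + c₆) ^ (-(dH + dW) * (1 / p))) := by
        rw [edW, eB]; ring
    _ = t ^ (-α) * κ ^ (1 / p) := by
        rw [hκdef, e2, e1,
          Real.mul_rpow (by positivity) (by positivity),
          Real.mul_rpow (by positivity) (by positivity),
          ← Real.rpow_mul hr.le, ← Real.rpow_mul h16.le]

/-- Dyadic annuli around a point. -/
def annulus {Z : Type} [PseudoMetricSpace Z] (x : Z) (r : ℝ) : ℕ → Set Z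
  | 0 => Metric.ball x r
  | (k + 1) => Metric.ball x (2 ^ (k + 1) * r) \ Metric.ball x (2 ^ k * r)

/-- The weights in the dyadic decomposition of the kernel upper bound. -/
def wgt (c₄ e : ℝ) : ℕ → ℝ
  | 0 => 1
  | (k + 1) => (c₄ * 2 ^ k) ^ (-e)

lemma annulus_cover {Z : Type} [PseudoMetricSpace Z] (x : Z) {r : ℝ} (hr : 0 < r) :
    (Set.univ : Set Z) ⊆ ⋃ k, annulus x r k := by
  intro y _
  obtain ⟨m, hm⟩ := pow_unbounded_of_one_lt (dist y x / r) one_lt_two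
  have hm' : dist y x < 2 ^ m * r := by rw [div_lt_iff₀ hr] at hm; linarith
  clear hm
  have main : ∀ m : ℕ, dist y x < 2 ^ m * r → y ∈ ⋃ k, annulus x r k := by
    intro m
    induction m with
    | zero =>
      intro hm0
      exact Set.mem_iUnion.2 ⟨0, show y ∈ Metric.ball x r from
        Metric.mem_ball.2 (by simpa using hm0)⟩
    | succ m ih =>
      intro hm1
      by_cases hcase : dist y x < 2 ^ m * r
      · exact ih hcase
      · exact Set.mem_iUnion.2 ⟨m + 1,
          ⟨Metric.mem_ball.2 hm1, fun hc => hcase (Metric.mem_ball.1 hc)⟩⟩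
  exact main m hm'

lemma wgt_pos {c₄ e : ℝ} (hc₄ : 0 < c₄) : ∀ k, 0 < wgt c₄ e k := by
  intro k
  cases k with
  | zero => norm_num [wgt]
  | succ k => rw [wgt]; positivity

lemma upper_per_t [SecondCountableTopology Y] (μ : Measure Y) [SigmaFinite μ]
    (K : ℝ → Y → Y → ℝ)
    {dH dW c₃ c₄ p α : ℝ} (hdH : 0 < dH) (hdW0 : 0 < dW)
    (hc₃ : 0 < c₃) (hc₄ : 0 < c₄) (hp : 1 ≤ p) (hα0 : 0 ≤ α) (hα1 : α < 1 / p)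
    (hUB : NonLocalUpperBound μ K c₃ c₄ dH dW)
    (f : Y → ℝ) (hf : Measurable f) (t : ℝ) (ht : 0 < t) :
    ENNReal.ofReal (t ^ (-α)) * besovEnergy μ K p t f ^ (1 / p) ≤
      ENNReal.ofReal ((c₃ * max 1 (c₄ ^ (-(dH + dW)) * 2 ^ ((α * dW + dH / p) * p) /
          2 ^ (dW * (α * p - 1))) * (1 - 2 ^ (dW * (α * p - 1)))⁻¹) ^ (1 / p)) *
      (⨆ (r : ℝ) (_ : 0 < r), metricBesovN μ dH p (α * dW) f r) := by
  have hp0 : (0 : ℝ) < p := lt_of_lt_of_le one_pos hp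
  set θ : ℝ := 2 ^ (dW * (α * p - 1)) with hθ
  have hθ0 : 0 < θ := Real.rpow_pos_of_pos two_pos _
  have hαp : α * p < 1 := by
    have := (lt_div_iff₀ hp0).1 hα1
    linarith
  have hθ1 : θ < 1 :=
    Real.rpow_lt_one_of_one_lt_of_neg one_lt_two (by nlinarith)
  set B₀ : ℝ := max 1 (c₄ ^ (-(dH + dW)) * 2 ^ ((α * dW + dH / p) * p) / θ) with hB
  have hB1 : (1 : ℝ) ≤ B₀ := le_max_left _ _
  have hB0 : 0 < B₀ := lt_of_lt_of_le one_pos hB1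
  have hB2 : c₄ ^ (-(dH + dW)) * 2 ^ ((α * dW + dH / p) * p) ≤ B₀ * θ := by
    rw [← div_le_iff₀ hθ0]
    exact le_max_right _ _
  have hG : 0 < (1 - θ)⁻¹ := inv_pos.2 (by linarith)
  set S := ⨆ (r : ℝ) (_ : 0 < r), metricBesovN μ dH p (α * dW) f r with hSdef
  set r : ℝ := t ^ (1 / dW) with hrdef
  have hr : 0 < r := Real.rpow_pos_of_pos ht _
  have hpow : ∀ k : ℕ, (0 : ℝ) < 2 ^ k * r := fun k => by positivity
  -- Step 1: decompose the energy over dyadic annuli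
  have hae := Measure.ae_ae_of_ae_prod (hUB t ht)
  have step1 : besovEnergy μ K p t f ≤
      ∑' k : ℕ, ENNReal.ofReal (c₃ * t ^ (-(dH / dW)) * wgt c₄ (dH + dW) k) *
        Dint μ p f (2 ^ k * r) := by
    rw [besovEnergy]
    have hptwise : ∀ᵐ x ∂μ,
        (∫⁻ y, ENNReal.ofReal (|f x - f y| ^ p) * ENNReal.ofReal (K t x y) ∂μ)
        ≤ ∑' k : ℕ, ENNReal.ofReal (c₃ * t ^ (-(dH / dW)) * wgt c₄ (dH + dW) k) *
            ∫⁻ y in Metric.ball x (2 ^ k * r), ENNReal.ofReal (|f x - f y| ^ p) ∂μ := by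
      filter_upwards [hae] with x hx
      have perk : ∀ k : ℕ, (∫⁻ y in annulus x r k,
            ENNReal.ofReal (|f x - f y| ^ p) * ENNReal.ofReal (K t x y) ∂μ)
          ≤ ENNReal.ofReal (c₃ * t ^ (-(dH / dW)) * wgt c₄ (dH + dW) k) *
            ∫⁻ y in Metric.ball x (2 ^ k * r), ENNReal.ofReal (|f x - f y| ^ p) ∂μ := by
        intro k
        cases k with
        | zero =>
          rw [annulus, wgt, mul_one, pow_zero, one_mul]
          calc (∫⁻ y in Metric.ball x r,
                ENNReal.ofReal (|f x - f y| ^ p) * ENNReal.ofReal (K t x y) ∂μ)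
              ≤ ∫⁻ y in Metric.ball x r,
                ENNReal.ofReal (c₃ * t ^ (-(dH / dW))) *
                  ENNReal.ofReal (|f x - f y| ^ p) ∂μ := by
                refine lintegral_mono_ae ?_
                filter_upwards [ae_restrict_of_ae hx] with y hy
                rw [mul_comm]
                refine mul_le_mul_left (ENNReal.ofReal_le_ofReal (hy.trans ?_)) _
                refine mul_le_of_le_one_right (by positivity) ?_
                refine Real.rpow_le_one_of_one_le_of_nonpos ?_ (by linarith)
                have : 0 ≤ c₄ * dist x y / t ^ (1 / dW) := by positivity
                linarith
            _ = ENNReal.ofReal (c₃ * t ^ (-(dH / dW))) *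
                ∫⁻ y in Metric.ball x r, ENNReal.ofReal (|f x - f y| ^ p) ∂μ :=
                lintegral_const_mul' _ _ ENNReal.ofReal_ne_top
        | succ k =>
          rw [annulus, wgt]
          calc (∫⁻ y in Metric.ball x (2 ^ (k + 1) * r) \ Metric.ball x (2 ^ k * r),
                ENNReal.ofReal (|f x - f y| ^ p) * ENNReal.ofReal (K t x y) ∂μ)
              ≤ ∫⁻ y in Metric.ball x (2 ^ (k + 1) * r) \ Metric.ball x (2 ^ k * r),
                ENNReal.ofReal (c₃ * t ^ (-(dH / dW)) * (c₄ * 2 ^ k) ^ (-(dH + dW))) *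
                  ENNReal.ofReal (|f x - f y| ^ p) ∂μ := by
                refine lintegral_mono_ae ?_
                filter_upwards [ae_restrict_of_ae hx,
                  ae_restrict_mem (measurableSet_ball.diff measurableSet_ball)] with y hy hymem
                rw [mul_comm]
                refine mul_le_mul_left (ENNReal.ofReal_le_ofReal (hy.trans ?_)) _
                refine mul_le_mul_of_nonneg_left ?_ (by positivity)
                refine rpow_neg_anti (by positivity) ?_ (by positivity)
                have hnot : ¬ dist y x < 2 ^ k * r := fun hc => hymem.2 (Metric.mem_ball.1 hc)
                have hge : 2 ^ k * r ≤ dist x y := by rw [dist_comm]; linarith [not_lt.1 hnot]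
                have : c₄ * 2 ^ k ≤ c₄ * (dist x y / r) := by
                  refine mul_le_mul_of_nonneg_left ?_ hc₄.le
                  rw [le_div_iff₀ hr]
                  linarith
                have heq : c₄ * dist x y / t ^ (1 / dW) = c₄ * (dist x y / r) := by
                  rw [← hrdef, mul_div_assoc]
                linarith [this, heq.ge]
            _ ≤ ∫⁻ y in Metric.ball x (2 ^ (k + 1) * r),
                ENNReal.ofReal (c₃ * t ^ (-(dH / dW)) * (c₄ * 2 ^ k) ^ (-(dH + dW))) *
                  ENNReal.ofReal (|f x - f y| ^ p) ∂μ :=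
                lintegral_mono_set Set.diff_subset
            _ = ENNReal.ofReal (c₃ * t ^ (-(dH / dW)) * (c₄ * 2 ^ k) ^ (-(dH + dW))) *
                ∫⁻ y in Metric.ball x (2 ^ (k + 1) * r),
                  ENNReal.ofReal (|f x - f y| ^ p) ∂μ :=
                lintegral_const_mul' _ _ ENNReal.ofReal_ne_top
      calc (∫⁻ y, ENNReal.ofReal (|f x - f y| ^ p) * ENNReal.ofReal (K t x y) ∂μ)
          = ∫⁻ y in Set.univ,
              ENNReal.ofReal (|f x - f y| ^ p) * ENNReal.ofReal (K t x y) ∂μ :=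
            (setLIntegral_univ _).symm
        _ ≤ ∫⁻ y in ⋃ k, annulus x r k,
              ENNReal.ofReal (|f x - f y| ^ p) * ENNReal.ofReal (K t x y) ∂μ :=
            lintegral_mono_set (annulus_cover x hr)
        _ ≤ ∑' k : ℕ, ∫⁻ y in annulus x r k,
              ENNReal.ofReal (|f x - f y| ^ p) * ENNReal.ofReal (K t x y) ∂μ :=
            lintegral_iUnion_le _ _
        _ ≤ _ := ENNReal.tsum_le_tsum perk
    calc (∫⁻ x, ∫⁻ y, ENNReal.ofReal (|f x - f y| ^ p) * ENNReal.ofReal (K t x y) ∂μ ∂μ)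
        ≤ ∫⁻ x, (∑' k : ℕ, ENNReal.ofReal (c₃ * t ^ (-(dH / dW)) * wgt c₄ (dH + dW) k) *
            ∫⁻ y in Metric.ball x (2 ^ k * r), ENNReal.ofReal (|f x - f y| ^ p) ∂μ) ∂μ :=
          lintegral_mono_ae hptwise
      _ = ∑' k : ℕ, ∫⁻ x, ENNReal.ofReal (c₃ * t ^ (-(dH / dW)) * wgt c₄ (dH + dW) k) *
            (∫⁻ y in Metric.ball x (2 ^ k * r), ENNReal.ofReal (|f x - f y| ^ p) ∂μ) ∂μ :=
          lintegral_tsum fun k =>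
            ((measurable_ballInt μ hf p _ (by linarith)).const_mul _).aemeasurable
      _ = ∑' k : ℕ, ENNReal.ofReal (c₃ * t ^ (-(dH / dW)) * wgt c₄ (dH + dW) k) *
            Dint μ p f (2 ^ k * r) := by
          exact tsum_congr fun k => lintegral_const_mul' _ _ ENNReal.ofReal_ne_top
  -- Step 2: sum the geometric series
  have hexp : -(dH + dW) + (α * dW + dH / p) * p = dW * (α * p - 1) := by
    field_simp
    ring
  have realineq : ∀ k : ℕ, c₃ * t ^ (-(dH / dW)) * wgt c₄ (dH + dW) k *
      ((2 : ℝ) ^ k * r) ^ ((α * dW + dH / p) * p)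
      ≤ c₃ * t ^ (-(dH / dW)) * r ^ ((α * dW + dH / p) * p) * B₀ * θ ^ k := by
    intro k
    have hTpos : (0 : ℝ) < c₃ * t ^ (-(dH / dW)) * r ^ ((α * dW + dH / p) * p) := by positivity
    cases k with
    | zero =>
      rw [wgt, pow_zero, pow_zero, one_mul, mul_one, mul_one]
      exact le_mul_of_one_le_right hTpos.le hB1
    | succ k =>
      rw [wgt]
      have hkey : (c₄ * 2 ^ k) ^ (-(dH + dW)) *
          ((2 : ℝ) ^ (k + 1) * r) ^ ((α * dW + dH / p) * p)
          = (c₄ ^ (-(dH + dW)) * 2 ^ ((α * dW + dH / p) * p)) * θ ^ k *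
            r ^ ((α * dW + dH / p) * p) := by
        rw [Real.mul_rpow hc₄.le (by positivity), Real.mul_rpow (by positivity) hr.le]
        have e1 : ((2 : ℝ) ^ k) ^ (-(dH + dW)) = (2 : ℝ) ^ ((k : ℝ) * (-(dH + dW))) := by
          rw [← Real.rpow_natCast 2 k, ← Real.rpow_mul (by norm_num)]
        have e2 : ((2 : ℝ) ^ (k + 1)) ^ ((α * dW + dH / p) * p)
            = (2 : ℝ) ^ (((k : ℝ) + 1) * ((α * dW + dH / p) * p)) := by
          rw [← Real.rpow_natCast 2 (k + 1), ← Real.rpow_mul (by norm_num)]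
          congr 1
          push_cast
          ring
        have e3 : θ ^ k = (2 : ℝ) ^ ((k : ℝ) * (dW * (α * p - 1))) := by
          rw [← Real.rpow_natCast θ k, hθ, ← Real.rpow_mul (by norm_num)]
          congr 1
          ring
        rw [e1, e2, e3]
        have hm : (2 : ℝ) ^ ((k : ℝ) * (-(dH + dW))) *
            (2 : ℝ) ^ (((k : ℝ) + 1) * ((α * dW + dH / p) * p))
            = (2 : ℝ) ^ ((α * dW + dH / p) * p) * (2 : ℝ) ^ ((k : ℝ) * (dW * (α * p - 1))) := by
          rw [← Real.rpow_add two_pos, ← Real.rpow_add two_pos]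
          congr 1
          rw [← hexp]
          ring
        linear_combination (c₄ ^ (-(dH + dW)) * r ^ ((α * dW + dH / p) * p)) * hm
      calc c₃ * t ^ (-(dH / dW)) * (c₄ * 2 ^ k) ^ (-(dH + dW)) *
            ((2 : ℝ) ^ (k + 1) * r) ^ ((α * dW + dH / p) * p)
          = (c₄ ^ (-(dH + dW)) * 2 ^ ((α * dW + dH / p) * p)) *
            (c₃ * t ^ (-(dH / dW)) * r ^ ((α * dW + dH / p) * p) * θ ^ k) := by
            rw [mul_assoc, hkey]
            ring
        _ ≤ (B₀ * θ) *
            (c₃ * t ^ (-(dH / dW)) * r ^ ((α * dW + dH / p) * p) * θ ^ k) :=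
            mul_le_mul_of_nonneg_right hB2
              (mul_nonneg hTpos.le (pow_nonneg hθ0.le k))
        _ = c₃ * t ^ (-(dH / dW)) * r ^ ((α * dW + dH / p) * p) * B₀ * θ ^ (k + 1) := by
            rw [pow_succ]
            ring
  have hrq : t ^ (-(dH / dW)) * r ^ ((α * dW + dH / p) * p) = t ^ (α * p) := by
    rw [hrdef, ← Real.rpow_mul ht.le, ← Real.rpow_add ht]
    congr 1
    field_simp
    ring
  have step2 : (∑' k : ℕ, ENNReal.ofReal (c₃ * t ^ (-(dH / dW)) * wgt c₄ (dH + dW) k) *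
        Dint μ p f (2 ^ k * r))
      ≤ ENNReal.ofReal (c₃ * B₀ * (1 - θ)⁻¹ * t ^ (α * p)) * S ^ p := by
    have hk : ∀ k : ℕ, ENNReal.ofReal (c₃ * t ^ (-(dH / dW)) * wgt c₄ (dH + dW) k) *
        Dint μ p f (2 ^ k * r)
        ≤ ENNReal.ofReal ((c₃ * t ^ (-(dH / dW)) * r ^ ((α * dW + dH / p) * p) * B₀) * θ ^ k) *
          S ^ p := by
      intro k
      have hwk := wgt_pos (e := dH + dW) hc₄ k
      calc ENNReal.ofReal (c₃ * t ^ (-(dH / dW)) * wgt c₄ (dH + dW) k) * Dint μ p f (2 ^ k * r)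
          ≤ ENNReal.ofReal (c₃ * t ^ (-(dH / dW)) * wgt c₄ (dH + dW) k) *
            (ENNReal.ofReal (((2 : ℝ) ^ k * r) ^ ((α * dW + dH / p) * p)) * S ^ p) :=
            mul_le_mul_right (Dint_le_sup μ (α * dW) hp0 f (hpow k)) _
        _ = ENNReal.ofReal (c₃ * t ^ (-(dH / dW)) * wgt c₄ (dH + dW) k *
              ((2 : ℝ) ^ k * r) ^ ((α * dW + dH / p) * p)) * S ^ p := by
            rw [← mul_assoc, ← ENNReal.ofReal_mul (by positivity)]
        _ ≤ _ := by
            refine mul_le_mul_left (ENNReal.ofReal_le_ofReal ?_) _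
            have := realineq k
            linarith
    calc (∑' k : ℕ, ENNReal.ofReal (c₃ * t ^ (-(dH / dW)) * wgt c₄ (dH + dW) k) *
          Dint μ p f (2 ^ k * r))
        ≤ ∑' k : ℕ, ENNReal.ofReal ((c₃ * t ^ (-(dH / dW)) *
            r ^ ((α * dW + dH / p) * p) * B₀) * θ ^ k) * S ^ p := ENNReal.tsum_le_tsum hk
      _ = (∑' k : ℕ, ENNReal.ofReal ((c₃ * t ^ (-(dH / dW)) *
            r ^ ((α * dW + dH / p) * p) * B₀) * θ ^ k)) * S ^ p := ENNReal.tsum_mul_right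
      _ = ENNReal.ofReal ((c₃ * t ^ (-(dH / dW)) * r ^ ((α * dW + dH / p) * p) * B₀) *
            (1 - θ)⁻¹) * S ^ p := by
          rw [← ENNReal.ofReal_tsum_of_nonneg (fun k => by positivity)
            ((summable_geometric_of_lt_one hθ0.le hθ1).mul_left _),
            tsum_mul_left, tsum_geometric_of_lt_one hθ0.le hθ1]
      _ = ENNReal.ofReal (c₃ * B₀ * (1 - θ)⁻¹ * t ^ (α * p)) * S ^ p := by
          congr 2
          rw [show c₃ * t ^ (-(dH / dW)) * r ^ ((α * dW + dH / p) * p) * B₀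
              = c₃ * B₀ * (t ^ (-(dH / dW)) * r ^ ((α * dW + dH / p) * p)) by ring, hrq]
          ring
  have henergy : besovEnergy μ K p t f ≤
      ENNReal.ofReal (c₃ * B₀ * (1 - θ)⁻¹ * t ^ (α * p)) * S ^ p := step1.trans step2
  have hXpos : (0 : ℝ) < c₃ * B₀ * (1 - θ)⁻¹ * t ^ (α * p) :=
    mul_pos (mul_pos (mul_pos hc₃ hB0) hG) (Real.rpow_pos_of_pos ht _)
  calc ENNReal.ofReal (t ^ (-α)) * besovEnergy μ K p t f ^ (1 / p)
      ≤ ENNReal.ofReal (t ^ (-α)) *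
        (ENNReal.ofReal (c₃ * B₀ * (1 - θ)⁻¹ * t ^ (α * p)) * S ^ p) ^ (1 / p) :=
        mul_le_mul_right (ENNReal.rpow_le_rpow henergy (by positivity)) _
    _ = ENNReal.ofReal ((c₃ * B₀ * (1 - θ)⁻¹) ^ (1 / p)) * S := by
        rw [ENNReal.mul_rpow_of_nonneg _ _ (by positivity : (0 : ℝ) ≤ 1 / p),
          ENNReal.ofReal_rpow_of_pos hXpos, ← ENNReal.rpow_mul,
          mul_one_div_cancel hp0.ne', ENNReal.rpow_one, ← mul_assoc,
          ← ENNReal.ofReal_mul (by positivity)]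
        congr 2
        have h1 : (c₃ * B₀ * (1 - θ)⁻¹ * t ^ (α * p)) ^ (1 / p)
            = (c₃ * B₀ * (1 - θ)⁻¹) ^ (1 / p) * t ^ α := by
          rw [Real.mul_rpow (le_of_lt (mul_pos (mul_pos hc₃ hB0) hG)) (by positivity), ← Real.rpow_mul ht.le]
          congr 1
          field_simp
        rw [h1]
        calc t ^ (-α) * ((c₃ * B₀ * (1 - θ)⁻¹) ^ (1 / p) * t ^ α)
            = (c₃ * B₀ * (1 - θ)⁻¹) ^ (1 / p) * (t ^ (-α) * t ^ α) := by ring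
          _ = (c₃ * B₀ * (1 - θ)⁻¹) ^ (1 / p) := by
              rw [← Real.rpow_add ht, neg_add_cancel, Real.rpow_zero, mul_one]

end Core

/-- **Characterization of Besov spaces under non-local heat kernel estimates.**
For `p ∈ [1,∞)` and `α ∈ [0,1/p)` there are constants `c, C > 0` depending only on
`p, α` and the structural constants such that
`c sup_{r>0} N_p^{αd_W}(f,r) ≤ ‖f‖_{p,α} ≤ C sup_{r>0} N_p^{αd_W}(f,r)` for every
`f ∈ L^p(X,μ)`; in particular `B^{p,α}(X) = {f ∈ L^p : sup_{r>0} N_p^{αd_W}(f,r) < ∞}`. -/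
theorem nonlocal_besov_characterization
    (dH dW c₁ c₂ c₃ c₄ c₅ c₆ p α : ℝ)
    (hdH : 0 < dH) (hdW0 : 0 < dW) (hdW1 : dW ≤ dH + 1)
    (hc₁ : 0 < c₁) (hc₂ : 0 < c₂) (hc₃ : 0 < c₃) (hc₄ : 0 < c₄)
    (hc₅ : 0 < c₅) (hc₆ : 0 < c₆)
    (hp : 1 ≤ p) (hα0 : 0 ≤ α) (hα1 : α < 1 / p) :
    ∃ c C : ℝ, 0 < c ∧ 0 < C ∧
      ∀ (X : Type) [MetricSpace X] [MeasurableSpace X] [BorelSpace X]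
        (μ : Measure X) [SigmaFinite μ] (K : ℝ → X → X → ℝ),
        IsHeatKernel μ K → AhlforsRegular μ c₁ c₂ dH →
        NonLocalUpperBound μ K c₃ c₄ dH dW →
        NonLocalLowerBound μ K c₅ c₆ dH dW →
        ∀ f : X → ℝ, MemLp f (ENNReal.ofReal p) μ →
          (ENNReal.ofReal c * (⨆ (r : ℝ) (_ : 0 < r), metricBesovN μ dH p (α * dW) f r) ≤
              besovSeminorm μ K p α f ∧
            besovSeminorm μ K p α f ≤
              ENNReal.ofReal C * (⨆ (r : ℝ) (_ : 0 < r), metricBesovN μ dH p (α * dW) f r)) ∧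
          (MemBesov μ K p α f ↔
            (⨆ (r : ℝ) (_ : 0 < r), metricBesovN μ dH p (α * dW) f r) ≠ ∞) := by
  classical
  have hp0 : (0 : ℝ) < p := lt_of_lt_of_le one_pos hp
  have h16 : (0 : ℝ) < 1 + c₆ := by linarith
  have hcpos : 0 < c₅ ^ (1 / p) * (1 + c₆) ^ (-((dH + dW) / p)) := by positivity
  have hθ0 : (0 : ℝ) < 2 ^ (dW * (α * p - 1)) := Real.rpow_pos_of_pos two_pos _
  have hαp : α * p < 1 := by
    have := (lt_div_iff₀ hp0).1 hα1
    linarith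
  have hθ1 : (2 : ℝ) ^ (dW * (α * p - 1)) < 1 :=
    Real.rpow_lt_one_of_one_lt_of_neg one_lt_two (by nlinarith)
  have hB0 : (0 : ℝ) < max 1 (c₄ ^ (-(dH + dW)) * 2 ^ ((α * dW + dH / p) * p) /
      2 ^ (dW * (α * p - 1))) := lt_of_lt_of_le one_pos (le_max_left _ _)
  have hG : (0 : ℝ) < (1 - 2 ^ (dW * (α * p - 1)))⁻¹ := inv_pos.2 (by linarith)
  have hCpos : (0 : ℝ) < (c₃ * max 1 (c₄ ^ (-(dH + dW)) * 2 ^ ((α * dW + dH / p) * p) /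
      2 ^ (dW * (α * p - 1))) * (1 - 2 ^ (dW * (α * p - 1)))⁻¹) ^ (1 / p) :=
    Real.rpow_pos_of_pos (mul_pos (mul_pos hc₃ hB0) hG) _
  refine ⟨c₅ ^ (1 / p) * (1 + c₆) ^ (-((dH + dW) / p)),
    (c₃ * max 1 (c₄ ^ (-(dH + dW)) * 2 ^ ((α * dW + dH / p) * p) / 2 ^ (dW * (α * p - 1))) *
      (1 - 2 ^ (dW * (α * p - 1)))⁻¹) ^ (1 / p), hcpos, hCpos, ?_⟩
  intro X _ _ _ μ _ K hK hAR hUB hLB f hf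
  haveI : SecondCountableTopology X := secondCountable_of_ahlfors hc₁ hAR
  have hfm : AEMeasurable f μ := hf.aestronglyMeasurable.aemeasurable
  set g := hfm.mk f with hg
  have hgmeas : Measurable g := hfm.measurable_mk
  have hfg : f =ᵐ[μ] g := hfm.ae_eq_mk
  have hSeq : (⨆ (r : ℝ) (_ : 0 < r), metricBesovN μ dH p (α * dW) f r)
      = ⨆ (r : ℝ) (_ : 0 < r), metricBesovN μ dH p (α * dW) g r :=
    iSup_congr fun r => iSup_congr fun _ => metricBesovN_congr hfg _ _ _ _
  have hBeq : besovSeminorm μ K p α f = besovSeminorm μ K p α g := besovSeminorm_congr hfg _ _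
  have hlow : ENNReal.ofReal (c₅ ^ (1 / p) * (1 + c₆) ^ (-((dH + dW) / p))) *
      (⨆ (r : ℝ) (_ : 0 < r), metricBesovN μ dH p (α * dW) f r)
      ≤ besovSeminorm μ K p α f := by
    rw [hSeq, hBeq]
    simp_rw [ENNReal.mul_iSup]
    refine iSup₂_le fun r hr => ?_
    refine le_trans (lower_per_r μ K hdH hdW0 hc₅ hc₆ hp hLB g r hr) ?_
    unfold besovSeminorm
    exact le_iSup₂ (f := fun t (_ : 0 < t) =>
      ENNReal.ofReal (t ^ (-α)) * besovEnergy μ K p t g ^ (1 / p))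
      (r ^ dW) (Real.rpow_pos_of_pos hr dW)
  have hup : besovSeminorm μ K p α f ≤
      ENNReal.ofReal ((c₃ * max 1 (c₄ ^ (-(dH + dW)) * 2 ^ ((α * dW + dH / p) * p) /
          2 ^ (dW * (α * p - 1))) * (1 - 2 ^ (dW * (α * p - 1)))⁻¹) ^ (1 / p)) *
      (⨆ (r : ℝ) (_ : 0 < r), metricBesovN μ dH p (α * dW) f r) := by
    rw [hSeq, hBeq]
    unfold besovSeminorm
    exact iSup₂_le fun t ht =>
      upper_per_t μ K hdH hdW0 hc₃ hc₄ hp hα0 hα1 hUB g hgmeas t ht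
  refine ⟨⟨hlow, hup⟩, ?_, ?_⟩
  · rintro ⟨-, hfin⟩ hS
    apply hfin
    have hlow' := hlow
    rw [hS] at hlow'
    refine top_le_iff.1 (le_trans (le_of_eq ?_) hlow')
    rw [ENNReal.mul_top (by
      simp only [ne_eq, ENNReal.ofReal_eq_zero, not_le]
      exact hcpos)]
  · intro hS
    exact ⟨hf, ne_top_of_le_ne_top (ENNReal.mul_ne_top ENNReal.ofReal_ne_top hS) hup⟩

end BesovDirichlet
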